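/- Let q ≥ 2, n ≥ 2 and r ≥ 1 be integers. Suppose S = (s_i) is an orientable sequence of order n over ℤ_q, and v = (v_0, ..., v_{n-r-1}) is a symmetric (n-r)-tuple over ℤ_q. Then |L_S(v)| is even, where L_S(v) is the set of n-tuples in L_n(v) that appear in S or in the reverse of S. -/

import Mathlib

namespace OSeq

variable {q : ℕ}

/-- The `n`-tuple (window) of the sequence `s` at position `i`. -/
def window (s : ℤ → ZMod q) (n : ℕ) (i : ℤ) : Fin n → ZMod q :=
  fun k => s (i + (k : ℕ))

/-- The reverse of an `n`-tuple. -/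
def tupRev {n : ℕ} (u : Fin n → ZMod q) : Fin n → ZMod q :=
  fun k => u k.rev

/-- `m` is the (least) period of the periodic sequence `s`. -/
def IsPeriod (s : ℤ → ZMod q) (m : ℕ) : Prop :=
  0 < m ∧ (∀ i : ℤ, s (i + (m : ℤ)) = s i) ∧
    ∀ m' : ℕ, 0 < m' → (∀ i : ℤ, s (i + (m' : ℤ)) = s i) → m ≤ m'

/-- `s` is an `n`-window sequence of period `m`. -/
def IsNWindowSeq (s : ℤ → ZMod q) (n m : ℕ) : Prop :=
  IsPeriod s m ∧ ∀ i j : ℤ, window s n i = window s n j → i ≡ j [ZMOD (m : ℤ)]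

/-- `s` is an orientable sequence of order `n` and period `m`. -/
def IsOS (s : ℤ → ZMod q) (n m : ℕ) : Prop :=
  IsNWindowSeq s n m ∧ ∀ i j : ℤ, window s n i ≠ tupRev (window s n j)

/-- `s` is a negative orientable sequence of order `n` and period `m`. -/
def IsNOS (s : ℤ → ZMod q) (n m : ℕ) : Prop :=
  IsNWindowSeq s n m ∧ ∀ i j : ℤ, window s n i ≠ - tupRev (window s n j)

/-- `s` is a special orientable sequence of order `n` and period `m`:
orientable and also negative orientable. -/
def IsSpecialOS (s : ℤ → ZMod q) (n m : ℕ) : Prop :=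
  IsOS s n m ∧ ∀ i j : ℤ, window s n i ≠ - tupRev (window s n j)

/-- The weight modulo `q` of one period of `s`. -/
def wq (s : ℤ → ZMod q) (m : ℕ) : ZMod q :=
  ∑ i ∈ Finset.range m, s (i : ℤ)

/-- The alternating sign weight modulo `q` of one period of `s`. -/
def wqA (s : ℤ → ZMod q) (m : ℕ) : ZMod q :=
  ∑ i ∈ Finset.range m, (-1 : ZMod q) ^ (m - 1 - i) * s (i : ℤ)

/-- The Lempel homomorphism `D` on sequences. -/
def D (t : ℤ → ZMod q) : ℤ → ZMod q := fun j => t (j + 1) - t j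

/-- The homomorphism `A` on sequences. -/
def A (t : ℤ → ZMod q) : ℤ → ZMod q := fun j => t (j + 1) + t j

/-- Shift of a sequence by `c`. -/
def shift (t : ℤ → ZMod q) (c : ℤ) : ℤ → ZMod q := fun i => t (i + c)

/-- `t'` is a translate of `t`. -/
def IsTranslate (t t' : ℤ → ZMod q) : Prop := ∃ c : ZMod q, ∀ i : ℤ, t' i = t i + c

/-- `t'` is an alternating sign translate of `t`. -/
def IsAltTranslate (t t' : ℤ → ZMod q) : Prop :=
  ∃ c : ZMod q, ∀ i : ℤ, t' i = t i + (if i % 2 = 0 then c else -c)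

/-- Two sequences are (`n`-window) disjoint. -/
def WindowDisjoint (n : ℕ) (s t : ℤ → ZMod q) : Prop :=
  ∀ i j : ℤ, window s n i ≠ window t n j

/-- Orientable-disjoint. -/
def ODisjoint (n : ℕ) (s t : ℤ → ZMod q) : Prop :=
  WindowDisjoint n s t ∧ ∀ i j : ℤ, window s n i ≠ tupRev (window t n j)

/-- Negative orientable-disjoint (no-disjoint). -/
def NODisjoint (n : ℕ) (s t : ℤ → ZMod q) : Prop :=
  WindowDisjoint n s t ∧ ∀ i j : ℤ, window s n i ≠ - tupRev (window t n j)

/-- Special-orientable-disjoint. -/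
def SpecialODisjoint (n : ℕ) (s t : ℤ → ZMod q) : Prop :=
  ODisjoint n s t ∧ ∀ i j : ℤ, window s n i ≠ - tupRev (window t n j)

/-- The string `a^t` appears in `s`. -/
def HasString (s : ℤ → ZMod q) (a : ZMod q) (t : ℕ) : Prop :=
  ∃ j : ℤ, ∀ k : ℕ, k < t → s (j + (k : ℤ)) = a

/-- There is a run `a^t` of `a` in `s` starting at position `j`. -/
def IsRunAt (s : ℤ → ZMod q) (a : ZMod q) (j : ℤ) (t : ℕ) : Prop :=
  (∀ k : ℕ, k < t → s (j + (k : ℤ)) = a) ∧ s (j - 1) ≠ a ∧ s (j + (t : ℤ)) ≠ a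

/-- `a^t` is a maximal run of `a` in `s`: the string `a^t` appears and every
string `a^{t'}` appearing in `s` has `t' ≤ t`. -/
def IsMaxRun (s : ℤ → ZMod q) (a : ZMod q) (t : ℕ) : Prop :=
  HasString s a t ∧ ∀ t' : ℕ, HasString s a t' → t' ≤ t

/-- `k`-th entry of the alternating string `a, -a, a, -a, ...`. -/
def altVal (a : ZMod q) (k : ℕ) : ZMod q := if k % 2 = 0 then a else -a

/-- The signed string `ạ^t` (alternating `a, -a, ...`) appears in `s`. -/
def HasSignedString (s : ℤ → ZMod q) (a : ZMod q) (t : ℕ) : Prop :=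
  ∃ j : ℤ, ∀ k : ℕ, k < t → s (j + (k : ℤ)) = altVal a k

/-- There is a signed run `ạ^t` of `a` in `s` starting at position `j`. -/
def IsSignedRunAt (s : ℤ → ZMod q) (a : ZMod q) (j : ℤ) (t : ℕ) : Prop :=
  (∀ k : ℕ, k < t → s (j + (k : ℤ)) = altVal a k) ∧
    s (j - 1) ≠ -a ∧ s (j + (t : ℤ)) ≠ altVal a t

/-- `ạ^t` is a maximal signed run of `a` in `s`. -/
def IsMaxSignedRun (s : ℤ → ZMod q) (a : ZMod q) (t : ℕ) : Prop :=
  HasSignedString s a t ∧ ∀ t' : ℕ, HasSignedString s a t' → t' ≤ t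

/-- The sequence obtained from the ring sequence `[s_0,...,s_{m-1}]` of `s` by
inserting one extra symbol `a` at ring position `r`, i.e. with ring sequence
`[s_0,...,s_{r-1}, a, s_r, ..., s_{m-1}]` of length `m+1`. -/
def insert1 (s : ℤ → ZMod q) (m r : ℕ) (a : ZMod q) : ℤ → ZMod q :=
  fun j =>
    let j' := (j % ((m : ℤ) + 1)).toNat
    if j' < r then s (j' : ℤ) else if j' = r then a else s ((j' : ℤ) - 1)

/-- The sequence obtained from the ring sequence `[s_0,...,s_{m-1}]` of `s` by
inserting the two symbols `a, -a` at ring position `r`, i.e. with ring sequence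
`[s_0,...,s_{r-1}, a, -a, s_r, ..., s_{m-1}]` of length `m+2`. -/
def insert2 (s : ℤ → ZMod q) (m r : ℕ) (a : ZMod q) : ℤ → ZMod q :=
  fun j =>
    let j' := (j % ((m : ℤ) + 2)).toNat
    if j' < r then s (j' : ℤ)
    else if j' = r then a
    else if j' = r + 1 then -a
    else s ((j' : ℤ) - 2)

/-- The operation `E_a` (with the convention `E_0(S) = S`). -/
def Emod (s : ℤ → ZMod q) (m r : ℕ) (a : ZMod q) : ℤ → ZMod q :=
  if a = 0 then s else insert1 s m r a

/-- A sequence is good (for order `n`) if every run of `0` has length at most `n-2`. -/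
def GoodSeq (s : ℤ → ZMod q) (n : ℕ) : Prop :=
  ∀ t : ℕ, HasString s 0 t → t ≤ n - 2

/-- A tuple is uniform if it is constant. -/
def Uniform {n : ℕ} (u : Fin n → ZMod q) : Prop := ∃ c : ZMod q, ∀ i, u i = c

/-- A tuple is symmetric if it equals its own reverse. -/
def Symm {n : ℕ} (u : Fin n → ZMod q) : Prop := ∀ i : Fin n, u i = u i.rev

/-- An `n`-tuple is `m`-symmetric (`m ≤ n`) if `u_i = u_{m-1-i}` for `0 ≤ i ≤ m-1`. -/
def MSymm {n : ℕ} (u : Fin n → ZMod q) (m : ℕ) (hm : m ≤ n) : Prop :=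
  ∀ i : Fin m, u (Fin.castLE hm i) = u (Fin.castLE hm i.rev)

/-- An `n`-tuple (`n ≥ 2`) is alternating. -/
def Alternating {n : ℕ} (hn : 2 ≤ n) (u : Fin n → ZMod q) : Prop :=
  u ⟨0, by omega⟩ ≠ u ⟨1, by omega⟩ ∧
    ∀ i : Fin n, u i = if (i : ℕ) % 2 = 0 then u ⟨0, by omega⟩ else u ⟨1, by omega⟩

/-- `L_n(v)`: the set of `n`-tuples whose first `n-r` entries agree with the
`(n-r)`-tuple `v`. -/
def Lset (n r : ℕ) (v : Fin (n - r) → ZMod q) : Set (Fin n → ZMod q) :=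
  {u | ∀ i : Fin (n - r), u (Fin.castLE (Nat.sub_le n r) i) = v i}

/-- The `n`-tuple `u` appears in the sequence `s`. -/
def AppearsIn (s : ℤ → ZMod q) (n : ℕ) (u : Fin n → ZMod q) : Prop :=
  ∃ i : ℤ, window s n i = u

end OSeq

open OSeq

private lemma tupRev_tupRev {q n : ℕ} (u : Fin n → ZMod q) : tupRev (tupRev u) = u := by
  funext k; simp [tupRev, Fin.rev_rev]

private lemma even_card_invol {α : Type*} [DecidableEq α] (f : α → α) (t : Finset α) :
    (∀ x ∈ t, f x ∈ t) → (∀ x ∈ t, f (f x) = x) → (∀ x ∈ t, f x ≠ x) → Even t.card := by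
  induction t using Finset.strongInduction with
  | _ t ih =>
    intro h1 h2 h3
    rcases t.eq_empty_or_nonempty with rfl | ⟨x, hx⟩
    · simp
    have hfx : f x ∈ t := h1 x hx
    have hne : f x ≠ x := h3 x hx
    set t' := (t.erase x).erase (f x) with ht'
    have hmem : ∀ y, y ∈ t' ↔ y ≠ f x ∧ y ≠ x ∧ y ∈ t := by
      intro y; simp [ht', Finset.mem_erase, and_assoc]
    have hss : t' ⊂ t :=
      ssubset_of_subset_of_ssubset (Finset.erase_subset _ _) (Finset.erase_ssubset hx)
    have h1' : ∀ y ∈ t', f y ∈ t' := by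
      intro y hy
      obtain ⟨hy1, hy2, hy3⟩ := (hmem y).1 hy
      refine (hmem (f y)).2 ⟨?_, ?_, h1 y hy3⟩
      · intro h
        have : f (f y) = f (f x) := by rw [h]
        rw [h2 y hy3, h2 x hx] at this
        exact hy2 this
      · intro h
        have : f (f y) = f x := by rw [h]
        rw [h2 y hy3] at this
        exact hy1 this
    have h2' : ∀ y ∈ t', f (f y) = y := fun y hy => h2 y ((hmem y).1 hy).2.2
    have h3' : ∀ y ∈ t', f y ≠ y := fun y hy => h3 y ((hmem y).1 hy).2.2
    have hcard : t.card = t'.card + 2 := by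
      have hx' : f x ∈ t.erase x := Finset.mem_erase.2 ⟨hne, hfx⟩
      have c1 : (t.erase x).card = t.card - 1 := Finset.card_erase_of_mem hx
      have c2 : t'.card = (t.erase x).card - 1 := Finset.card_erase_of_mem hx'
      have : 1 < t.card := Finset.one_lt_card.2 ⟨x, hx, f x, hfx, hne.symm⟩
      omega
    obtain ⟨c, hc⟩ := ih t' hss h1' h2' h3'
    exact ⟨c + 1, by omega⟩

/-- If `S` is an orientable sequence of order `n` over `ℤ_q` and `v` is a
symmetric `(n-r)`-tuple (`r ≥ 1`), then the set `L_S(v)` of `n`-tuples of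
`L_n(v)` appearing in `S` or in the reverse of `S` has even cardinality. -/
theorem LS_even {q n m r : ℕ} (hq : 2 ≤ q) (hn : 2 ≤ n) (hr : 1 ≤ r)
    (s : ℤ → ZMod q) (hS : IsOS s n m)
    (v : Fin (n - r) → ZMod q) (hv : Symm v) :
    Even (Set.ncard {u ∈ Lset n r v | AppearsIn s n u ∨ AppearsIn s n (tupRev u)}) := by
  classical
  haveI : NeZero q := ⟨by omega⟩
  obtain ⟨⟨⟨hm0, hper, hmin⟩, hwin⟩, hor⟩ := hS
  -- periodicity for all integer multiples
  have pall : ∀ (c i : ℤ), s (i + c * (m : ℤ)) = s i := by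
    intro c
    induction c using Int.induction_on with
    | zero => simp
    | succ k ih =>
      intro i
      have h1 : i + ((k : ℤ) + 1) * (m : ℤ) = (i + k * m) + m := by ring
      rw [h1, hper, ih]
    | pred k ih =>
      intro i
      have h1 : i + (-(k : ℤ) - 1) * (m : ℤ) + m = i + (-(k : ℤ)) * m := by ring
      have h2 := hper (i + (-(k : ℤ) - 1) * (m : ℤ))
      rw [h1] at h2
      rw [← h2, ih]
  -- equal windows propagate to shifted positions
  have wcong : ∀ i j : ℤ, window s n i = window s n j →
      ∀ d : ℤ, window s n (i + d) = window s n (j + d) := by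
    intro i j hij d
    obtain ⟨c, hc⟩ := (hwin i j hij).dvd
    funext k
    have hj : (j : ℤ) + d + ((k : ℕ) : ℤ) = (i + d + ((k : ℕ) : ℤ)) + c * m := by
      have : j - i = (m : ℤ) * c := hc
      linarith
    show s (i + d + ((k : ℕ) : ℤ)) = s (j + d + ((k : ℕ) : ℤ))
    rw [hj, pall]
  -- a tuple cannot appear both in S and in its reverse
  have excl : ∀ u : Fin n → ZMod q, AppearsIn s n u → AppearsIn s n (tupRev u) → False := by
    rintro u ⟨i, hi⟩ ⟨j, hj⟩
    exact hor i j (by rw [hi, hj, tupRev_tupRev])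
  -- the pairing function
  set f : (Fin n → ZMod q) → (Fin n → ZMod q) := fun u =>
    if h : AppearsIn s n u then tupRev (window s n (h.choose - (r : ℤ)))
    else if h' : AppearsIn s n (tupRev u) then window s n (h'.choose + (r : ℤ)) else u
    with hf
  have fA : ∀ u, ∀ i : ℤ, window s n i = u →
      f u = tupRev (window s n (i - (r : ℤ))) := by
    intro u i hi
    have h : AppearsIn s n u := ⟨i, hi⟩
    simp only [hf, dif_pos h]
    have := wcong h.choose i (h.choose_spec.trans hi.symm) (-(r : ℤ))
    exact congrArg tupRev (by simpa [sub_eq_add_neg] using this)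
  have fB : ∀ u, ¬ AppearsIn s n u → ∀ j : ℤ, window s n j = tupRev u →
      f u = window s n (j + (r : ℤ)) := by
    intro u hnA j hj
    have h' : AppearsIn s n (tupRev u) := ⟨j, hj⟩
    simp only [hf, dif_neg hnA, dif_pos h']
    exact wcong h'.choose j (h'.choose_spec.trans hj.symm) (r : ℤ)
  -- prefix lemmas
  have prefA : ∀ i : ℤ, window s n i ∈ Lset n r v →
      tupRev (window s n (i - (r : ℤ))) ∈ Lset n r v := by
    intro i hi k
    have hk : (k : ℕ) < n - r := k.isLt
    have e1 : tupRev (window s n (i - (r : ℤ))) (Fin.castLE (Nat.sub_le n r) k)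
        = s (i - (r : ℤ) + ((n - ((k : ℕ) + 1) : ℕ) : ℤ)) := by
      simp [tupRev, window, Fin.rev]
    have k' : Fin (n - r) := ⟨n - r - ((k : ℕ) + 1), by omega⟩
    have e2 : (i - (r : ℤ) + ((n - ((k : ℕ) + 1) : ℕ) : ℤ))
        = i + (((n - r - ((k : ℕ) + 1)) : ℕ) : ℤ) := by omega
    have e3 : s (i + (((n - r - ((k : ℕ) + 1)) : ℕ) : ℤ))
        = window s n i (Fin.castLE (Nat.sub_le n r) ⟨n - r - ((k : ℕ) + 1), by omega⟩) := by
      simp [window, Fin.castLE]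
    rw [e1, e2, e3, hi ⟨n - r - ((k : ℕ) + 1), by omega⟩]
    have : (⟨n - r - ((k : ℕ) + 1), by omega⟩ : Fin (n - r)) = k.rev := by
      apply Fin.ext
      simp [Fin.val_rev]
    rw [this]
    exact (hv k).symm
  have prefB : ∀ j : ℤ, tupRev (window s n j) ∈ Lset n r v →
      window s n (j + (r : ℤ)) ∈ Lset n r v := by
    intro j hj k
    have hk : (k : ℕ) < n - r := k.isLt
    have h1 := hj k.rev
    have e1 : tupRev (window s n j) (Fin.castLE (Nat.sub_le n r) k.rev)
        = s (j + ((n - ((k.rev : ℕ) + 1) : ℕ) : ℤ)) := by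
      simp [tupRev, window, Fin.rev]
    have e2 : ((n - (((k.rev : ℕ)) + 1) : ℕ) : ℤ) = ((r + (k : ℕ) : ℕ) : ℤ) := by
      have : (k.rev : ℕ) = n - r - ((k : ℕ) + 1) := by simp [Fin.val_rev]
      omega
    rw [e1, e2] at h1
    have e3 : window s n (j + (r : ℤ)) (Fin.castLE (Nat.sub_le n r) k)
        = s (j + (r : ℤ) + ((k : ℕ) : ℤ)) := rfl
    have e4 : (j + (r : ℤ) + ((k : ℕ) : ℤ)) = j + ((r + (k : ℕ) : ℕ) : ℤ) := by omega
    rw [e3, e4, h1, ← hv k]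
  -- set up the finite set and apply the involution lemma
  rw [Set.ncard_eq_toFinset_card' ]
  apply even_card_invol f
  all_goals
    intro u hu
    rw [Set.mem_toFinset] at hu
    obtain ⟨hLu, hApp⟩ := hu
  -- three goals: maps into, involution, no fixed point
  · rw [Set.mem_toFinset]
    by_cases hA : AppearsIn s n u
    · obtain ⟨i, hi⟩ := hA
      have hfu := fA u i hi
      have hiL : window s n i ∈ Lset n r v := by rw [hi]; exact hLu
      constructor
      · rw [hfu]; exact prefA i hiL
      · right
        refine ⟨i - (r : ℤ), ?_⟩
        rw [hfu, tupRev_tupRev]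
    · obtain ⟨j, hj⟩ := hApp.resolve_left hA
      have hfu := fB u hA j hj
      have hjL : tupRev (window s n j) ∈ Lset n r v := by
        rw [hj, tupRev_tupRev]; exact hLu
      constructor
      · rw [hfu]; exact prefB j hjL
      · left; exact ⟨j + (r : ℤ), hfu.symm⟩
  · by_cases hA : AppearsIn s n u
    · obtain ⟨i, hi⟩ := hA
      have hfu := fA u i hi
      have hnA : ¬ AppearsIn s n (f u) := by
        rintro ⟨j, hjw⟩
        rw [hfu] at hjw
        exact hor j (i - (r : ℤ)) hjw
      have hw : window s n (i - (r : ℤ)) = tupRev (f u) := by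
        rw [hfu, tupRev_tupRev]
      rw [fB (f u) hnA (i - (r : ℤ)) hw, sub_add_cancel, hi]
    · obtain ⟨j, hj⟩ := hApp.resolve_left hA
      have hfu := fB u hA j hj
      have hw : window s n (j + (r : ℤ)) = f u := hfu.symm
      rw [fA (f u) (j + (r : ℤ)) hw, add_sub_cancel_right, hj, tupRev_tupRev]
  · by_cases hA : AppearsIn s n u
    · obtain ⟨i, hi⟩ := hA
      have hfu := fA u i hi
      intro heq
      exact hor i (i - (r : ℤ)) (by rw [hi, ← heq, hfu])
    · obtain ⟨j, hj⟩ := hApp.resolve_left hA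
      have hfu := fB u hA j hj
      intro heq
      exact hor (j + (r : ℤ)) j (by rw [hj, tupRev_tupRev, ← heq, hfu])
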